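/- Let X ~ MLFD(λ, α, β) with λ, α, β > 0. Then the cumulative distribution function satisfies P(X ≤ r) = 1 − λ^{r+1} E_{α, β+(r+1)α}(λ) / E_{α,β}(λ) for every nonnegative integer r. -/

import Mathlib

open Real Filter

noncomputable def mittagLeffler (α β z : ℝ) : ℝ :=
  ∑' k : ℕ, z ^ k / Real.Gamma (α * k + β)

/-- The pmf of the Mittag-Leffler function distribution MLFD(λ, α, β). -/
noncomputable def mlfdPmf (lam α β : ℝ) (k : ℕ) : ℝ :=
  lam ^ k / (Real.Gamma (α * k + β) * mittagLeffler α β lam)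

lemma gamma_lb_aux {x a : ℝ} (hx : 2 ≤ x) (ha : 0 < a) (ha1 : a < 1) :
    (x - 1) ^ a * Gamma x ≤ Gamma (x + a) := by
  have hy : 0 < x + a - 1 := by linarith
  have hG : 0 < Gamma (x + a) := Gamma_pos_of_pos (by linarith)
  have hkey := Real.Gamma_mul_add_mul_le_rpow_Gamma_mul_rpow_Gamma
    (s := x + a - 1) (t := x + a) (a := a) (b := 1 - a) hy (by linarith) ha
    (by linarith) (by ring)
  rw [show a * (x + a - 1) + (1 - a) * (x + a) = x by ring] at hkey
  have hfe : Gamma (x + a - 1) = Gamma (x + a) / (x + a - 1) := by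
    have := Real.Gamma_add_one (ne_of_gt hy)
    rw [show x + a - 1 + 1 = x + a by ring] at this
    field_simp [this]
    linarith
  rw [hfe, div_rpow hG.le hy.le, div_mul_eq_mul_div,
    ← Real.rpow_add hG, show a + (1 - a) = 1 by ring, Real.rpow_one] at hkey
  have h1 : Gamma x * (x + a - 1) ^ a ≤ Gamma (x + a) := by
    rw [← le_div_iff₀ (Real.rpow_pos_of_pos hy a)]
    exact hkey
  have h2 : (x - 1) ^ a ≤ (x + a - 1) ^ a :=
    Real.rpow_le_rpow (by linarith) (by linarith) ha.le
  have hGx : 0 < Gamma x := Gamma_pos_of_pos (by linarith)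
  calc (x - 1) ^ a * Gamma x ≤ (x + a - 1) ^ a * Gamma x :=
        mul_le_mul_of_nonneg_right h2 hGx.le
    _ ≤ Gamma (x + a) := by rw [mul_comm]; exact h1

lemma gamma_lb {x a : ℝ} (hx : 2 ≤ x) (ha : 0 < a) :
    (x - 1) ^ (min a 1 : ℝ) * Gamma x ≤ Gamma (x + a) := by
  rcases lt_or_ge a 1 with h | h
  · rw [min_eq_left h.le]; exact gamma_lb_aux hx ha h
  · rw [min_eq_right h]
    have h1 : Gamma (x + 1) ≤ Gamma (x + a) := by
      rcases eq_or_lt_of_le h with rfl | h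
      · rfl
      · exact (Real.Gamma_strictMonoOn_Ici (by simp; linarith) (by simp; linarith)
          (by linarith)).le
    calc (x - 1) ^ (1:ℝ) * Gamma x ≤ x * Gamma x := by
          rw [Real.rpow_one]
          have := Gamma_pos_of_pos (show (0:ℝ) < x by linarith)
          nlinarith
      _ = Gamma (x + 1) := (Real.Gamma_add_one (by positivity)).symm
      _ ≤ Gamma (x + a) := h1

lemma summable_ml {lam α β : ℝ} (hlam : 0 < lam) (hα : 0 < α) (hβ : 0 < β) :
    Summable (fun k : ℕ => lam ^ k / Gamma (α * k + β)) := by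
  set a := min α 1 with ha_def
  have ha : 0 < a := lt_min hα one_pos
  apply summable_of_ratio_norm_eventually_le (r := 1/2) (by norm_num)
  have h1 : Tendsto (fun k : ℕ => α * k + β) atTop atTop := by
    apply tendsto_atTop_add_const_right
    exact (tendsto_natCast_atTop_atTop).const_mul_atTop hα
  have h2 : Tendsto (fun k : ℕ => (α * k + β - 1) ^ a) atTop atTop :=
    (tendsto_rpow_atTop ha).comp (tendsto_atTop_add_const_right _ (-1+0) (by
      simpa using h1) |>.congr (fun k => by ring_nf))
  have hev : ∀ᶠ k : ℕ in atTop, 2 ≤ α * k + β ∧ 2 * lam ≤ (α * k + β - 1) ^ a :=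
    (h1.eventually_ge_atTop 2).and (h2.eventually_ge_atTop (2 * lam))
  filter_upwards [hev] with k ⟨hk2, hklam⟩
  have hx : 0 < α * k + β := by linarith
  have hG : 0 < Gamma (α * k + β) := Gamma_pos_of_pos hx
  have hG' : 0 < Gamma (α * k + β + α) := Gamma_pos_of_pos (by linarith)
  have hlb : (α * k + β - 1) ^ a * Gamma (α * k + β) ≤ Gamma (α * k + β + α) :=
    gamma_lb hk2 hα
  have key : 2 * lam * Gamma (α * k + β) ≤ Gamma (α * k + β + α) := by
    calc 2 * lam * Gamma (α * k + β) ≤ (α * k + β - 1) ^ a * Gamma (α * k + β) := by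
          gcongr
      _ ≤ _ := hlb
  rw [Real.norm_eq_abs, Real.norm_eq_abs, abs_of_pos (by positivity),
    abs_of_pos (by positivity)]
  have hcast : α * (↑(k+1) : ℝ) + β = α * k + β + α := by push_cast; ring
  rw [hcast, pow_succ, div_le_iff₀ hG', mul_comm (1/2 : ℝ) _, div_mul_eq_mul_div,
    div_mul_eq_mul_div, le_div_iff₀ hG]
  nlinarith [pow_pos hlam k]

lemma ml_pos {lam α β : ℝ} (hlam : 0 < lam) (hα : 0 < α) (hβ : 0 < β) :
    0 < mittagLeffler α β lam := by
  apply Summable.tsum_pos (summable_ml hlam hα hβ) (fun k => by positivity) 0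
  have : Gamma (α * (0:ℕ) + β) = Gamma β := by norm_num
  simp only [pow_zero, this]
  positivity

lemma ml_split {lam α β : ℝ} (hlam : 0 < lam) (hα : 0 < α) (hβ : 0 < β) (N : ℕ) :
    mittagLeffler α β lam
      = ∑ k ∈ Finset.range N, lam ^ k / Gamma (α * k + β)
        + lam ^ N * mittagLeffler α (β + N * α) lam := by
  have hs := summable_ml hlam hα hβ
  have h := Summable.sum_add_tsum_nat_add N hs
  rw [mittagLeffler, ← h]
  congr 1
  rw [mittagLeffler, ← tsum_mul_left]
  congr 1 with k
  have : α * (↑(k + N) : ℝ) + β = α * k + (β + N * α) := by push_cast; ring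
  rw [this, pow_add, mul_comm (lam ^ k), mul_div_assoc]

/-- CDF: `P(X ≤ r) = 1 − λ^{r+1} E_{α,β+(r+1)α}(λ)/E_{α,β}(λ)`. -/
theorem mlfd_cdf (lam α β : ℝ) (hlam : 0 < lam) (hα : 0 < α) (hβ : 0 < β) (r : ℕ) :
    ∑ k ∈ Finset.range (r + 1), mlfdPmf lam α β k
      = 1 - lam ^ (r + 1) * mittagLeffler α (β + (r + 1) * α) lam / mittagLeffler α β lam := by
  have hE : 0 < mittagLeffler α β lam := ml_pos hlam hα hβ
  have hsplit := ml_split hlam hα hβ (r + 1)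
  have hlhs : ∑ k ∈ Finset.range (r + 1), mlfdPmf lam α β k
      = (∑ k ∈ Finset.range (r + 1), lam ^ k / Gamma (α * k + β)) / mittagLeffler α β lam := by
    rw [Finset.sum_div]
    congr 1 with k
    rw [mlfdPmf, div_div]
  rw [hlhs]
  have hcast : ((↑(r + 1) : ℝ)) = (r : ℝ) + 1 := by push_cast; ring
  rw [eq_sub_iff_add_eq, ← add_div, div_eq_one_iff_eq hE.ne']
  rw [hsplit]
  push_cast
  ring
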